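/- arXiv:2106.10946 — 2 statements merged into one kernel-verified Lean document; each statement's English description precedes it below -/
import Mathlib

section
/- If a logic program P has a ≥-largest predicate (a predicate q such that q ≥ p for all predicates p of P) and P is strict, then the set of all predicates of P has a signing. -/
/-- Signed dependency relation: `SignedDep dp dn p i q` formalizes `p ≥ᵢ q`. -/
inductive SignedDep {Pred : Type*} (dp dn : Pred → Pred → Prop) : Pred → ℤ → Pred → Prop
  | refl (p : Pred) : SignedDep dp dn p 1 p
  | pos {p q r : Pred} {j : ℤ} : dp p q → SignedDep dp dn q j r →
      SignedDep dp dn p (1 * j) r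
  | neg {p q r : Pred} {j : ℤ} : dn p q → SignedDep dp dn q j r →
      SignedDep dp dn p ((-1) * j) r

lemma SignedDep.sign_pm {Pred : Type*} {dp dn : Pred → Pred → Prop} {p q : Pred} {i : ℤ}
    (h : SignedDep dp dn p i q) : i = 1 ∨ i = -1 := by
  induction h with
  | refl => left; rfl
  | pos _ _ ih => rcases ih with h | h <;> simp [h]
  | neg _ _ ih => rcases ih with h | h <;> simp [h]

lemma SignedDep.trans {Pred : Type*} {dp dn : Pred → Pred → Prop} {p q r : Pred} {i j : ℤ}
    (h : SignedDep dp dn p i q) (h2 : SignedDep dp dn q j r) :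
    SignedDep dp dn p (i * j) r := by
  induction h with
  | refl => simpa using h2
  | pos hd _ ih => rw [mul_assoc]; exact .pos hd (ih h2)
  | neg hd _ ih => rw [mul_assoc]; exact .neg hd (ih h2)

theorem stmt7 {Pred : Type*} (dp dn : Pred → Pred → Prop) (q0 : Pred)
    (hlarge : ∀ p : Pred, ∃ i : ℤ, SignedDep dp dn q0 i p)
    (hstrict : ∀ p q : Pred, ¬ (SignedDep dp dn p 1 q ∧ SignedDep dp dn p (-1) q)) :
    ∃ s : Pred → ℤ, (∀ p, s p = 1 ∨ s p = -1) ∧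
      ∀ p q (i : ℤ), SignedDep dp dn p i q → s p = s q * i := by
  choose s hs using hlarge
  refine ⟨s, fun p => (hs p).sign_pm, fun p q i h => ?_⟩
  have h1 : SignedDep dp dn q0 (s p * i) q := (hs p).trans h
  have h2 : SignedDep dp dn q0 (s q) q := hs q
  have hq : s q = s p * i := by
    by_contra hne
    rcases (hs q).sign_pm with e | e <;> rcases h1.sign_pm with e2 | e2
    · exact hne (e.trans e2.symm)
    · exact hstrict q0 q ⟨e ▸ h2, e2 ▸ h1⟩
    · exact hstrict q0 q ⟨e2 ▸ h1, e ▸ h2⟩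
    · exact hne (e.trans e2.symm)
  rcases h.sign_pm with e | e <;> rcases (hs p).sign_pm with e3 | e3 <;>
    rw [hq, e, e3] <;> ring
end

section
/- Let D be a propositional defeasible theory with closures P_Δ and P_λ. Define the ∂*-operator (individual defeat) on sets S of literals: q ∈ F*(S) iff q ∈ P_Δ, or there exists r ∈ R_sd with head q such that all body literals of r are in S, ~q ∉ P_Δ, and for every rule s with head ~q, either some body literal of s is not in P_λ, or r > s. Similarly define the ∂-operator (team defeat) F where the last condition 'r > s' is replaced by 'there exists t ∈ R_sd with head q, all body literals of t in S, and t > s'. Then both F* and F are monotone, and lfp(F*) ⊆ lfp(F) (i.e., every ∂*-consequence is a ∂-consequence). -/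
/-- A rule of a propositional defeasible theory: a finite set of body
literals and a head literal. -/
structure SRule (L : Type*) where
  head : L
  body : Finset L

theorem stmt19 {L : Type*} (R Rsd : Set (SRule L)) (hsub : Rsd ⊆ R)
    (sup : SRule L → SRule L → Prop)
    (hacyc : ∀ r : SRule L, ¬ Relation.TransGen sup r r)
    (compl : L → L) (PD Plam : Set L) :
    Monotone (fun S : Set L =>
      {q | q ∈ PD ∨ ∃ r ∈ Rsd, r.head = q ∧ (∀ b ∈ r.body, b ∈ S) ∧ compl q ∉ PD ∧
        ∀ s ∈ R, s.head = compl q →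
          ((∃ b ∈ s.body, b ∉ Plam) ∨ sup r s)}) ∧
    Monotone (fun S : Set L =>
      {q | q ∈ PD ∨ ∃ r ∈ Rsd, r.head = q ∧ (∀ b ∈ r.body, b ∈ S) ∧ compl q ∉ PD ∧
        ∀ s ∈ R, s.head = compl q →
          ((∃ b ∈ s.body, b ∉ Plam) ∨
            ∃ t ∈ Rsd, t.head = q ∧ (∀ b ∈ t.body, b ∈ S) ∧ sup t s)}) ∧
    ∀ (hstar : Monotone (fun S : Set L =>
      {q | q ∈ PD ∨ ∃ r ∈ Rsd, r.head = q ∧ (∀ b ∈ r.body, b ∈ S) ∧ compl q ∉ PD ∧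
        ∀ s ∈ R, s.head = compl q →
          ((∃ b ∈ s.body, b ∉ Plam) ∨ sup r s)}))
      (hteam : Monotone (fun S : Set L =>
      {q | q ∈ PD ∨ ∃ r ∈ Rsd, r.head = q ∧ (∀ b ∈ r.body, b ∈ S) ∧ compl q ∉ PD ∧
        ∀ s ∈ R, s.head = compl q →
          ((∃ b ∈ s.body, b ∉ Plam) ∨
            ∃ t ∈ Rsd, t.head = q ∧ (∀ b ∈ t.body, b ∈ S) ∧ sup t s)})),
      OrderHom.lfp ⟨_, hstar⟩ ⊆ OrderHom.lfp ⟨_, hteam⟩ := by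
  refine ⟨?_, ?_, ?_⟩
  · intro S T hST q hq
    rcases hq with h | ⟨r, hr, hh, hb, hc, hs⟩
    · exact Or.inl h
    · exact Or.inr ⟨r, hr, hh, fun b hb' => hST (hb b hb'), hc, hs⟩
  · intro S T hST q hq
    rcases hq with h | ⟨r, hr, hh, hb, hc, hs⟩
    · exact Or.inl h
    · refine Or.inr ⟨r, hr, hh, fun b hb' => hST (hb b hb'), hc, fun s hsR hsh => ?_⟩
      rcases hs s hsR hsh with h | ⟨t, ht, hth, htb, hts⟩
      · exact Or.inl h
      · exact Or.inr ⟨t, ht, hth, fun b hb' => hST (htb b hb'), hts⟩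
  · intro hstar hteam
    apply OrderHom.lfp_le
    intro q hq
    have hfix := OrderHom.map_lfp (⟨_, hteam⟩ : (Set L →o Set L))
    rw [← hfix]
    rcases hq with h | ⟨r, hr, hh, hb, hc, hs⟩
    · exact Or.inl h
    · refine Or.inr ⟨r, hr, hh, hb, hc, fun s hsR hsh => ?_⟩
      rcases hs s hsR hsh with h | h
      · exact Or.inl h
      · exact Or.inr ⟨r, hr, hh, hb, h⟩
end
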